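/- Let f : ℝ^{d_x} × ℝ^{d_y} → ℝ be differentiable with L_g-Lipschitz gradient, and let y* : ℝ^{d_x} → ℝ^{d_y} be L_y-Lipschitz. Let μ > 0, F_μ(x) = f(x, y_μ(x)), and define ḡ(x) = ∇_x f(x, y*(x)) + Jac y_μ(x)ᵀ ∇_y f(x, y*(x)). Then for all x ∈ ℝ^{d_x}, ‖ḡ(x) − ∇F_μ(x)‖ ≤ L_g (1 + L_y) L_y μ. -/

import Mathlib

open MeasureTheory Metric
open scoped InnerProductSpace RealInnerProductSpace NNReal

noncomputable section

/-- `ℝ^n` with the Euclidean norm. -/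
abbrev E (n : ℕ) : Type := EuclideanSpace ℝ (Fin n)

/-- Uniform (normalized Lebesgue) probability measure on the closed unit ball of `ℝ^n`. -/
def uniformBall (n : ℕ) : Measure (E n) :=
  (volume (closedBall (0 : E n) 1))⁻¹ • volume.restrict (closedBall (0 : E n) 1)

/-- Uniform (rotation-invariant) probability measure on the unit sphere of `ℝ^n`,
viewed as a measure on the ambient space. -/
def uniformSphere (n : ℕ) : Measure (E n) :=
  ((volume : Measure (E n)).toSphere Set.univ)⁻¹ •
    Measure.map Subtype.val ((volume : Measure (E n)).toSphere)

/-- Ball smoothing `y_μ` of a map `y : ℝ^{d_x} → ℝ^{d_y}`: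
`y_μ(x) = E_{u ~ U(B^{d_x})}[y(x + μ u)]`. -/
def ymu {dx dy : ℕ} (y : E dx → E dy) (μ : ℝ) (x : E dx) : E dy :=
  ∫ u, y (x + μ • u) ∂(uniformBall dx)

/-- Partial gradient `∇_x f` of `f : ℝ^{d_x} × ℝ^{d_y} → ℝ` in its first argument. -/
def gradx {dx dy : ℕ} (f : E dx × E dy → ℝ) (x : E dx) (y : E dy) : E dx :=
  gradient (fun x' => f (x', y)) x

/-- Partial gradient `∇_y f` of `f : ℝ^{d_x} × ℝ^{d_y} → ℝ` in its second argument. -/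
def grady {dx dy : ℕ} (f : E dx × E dy → ℝ) (x : E dx) (y : E dy) : E dy :=
  gradient (fun y' => f (x, y')) y

/-- Smoothed surrogate `F_μ(x) = f(x, y_μ(x))`. -/
def Fmu {dx dy : ℕ} (f : E dx × E dy → ℝ) (y : E dx → E dy) (μ : ℝ) (x : E dx) : ℝ :=
  f (x, ymu y μ x)


section SecDiff

open Filter

variable {X Y : Type*} [NormedAddCommGroup X] [NormedSpace ℝ X]
  [NormedAddCommGroup Y] [NormedSpace ℝ Y] [CompleteSpace Y]

set_option maxHeartbeats 1000000 in
theorem differentiable_of_secdiff_bound (F : X → Y) (L : ℝ≥0) (hL : LipschitzWith L F)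
    (C : ℝ) (hC : ∀ x h : X, ‖F (x + h) + F (x - h) - 2 • F x‖ ≤ C * ‖h‖ ^ 2) :
    Differentiable ℝ F := by
  intro x
  -- the difference quotient sequence
  set a : X → ℕ → Y := fun h k => (2 : ℝ) ^ k • (F (x + ((2 : ℝ) ^ k)⁻¹ • h) - F x) with ha
  have key : ∀ (h : X) (k : ℕ),
      dist (a h k) (a h (k + 1)) ≤ (C * ‖h‖ ^ 2 / 4) * (1 / 2) ^ k := by
    intro h k
    have h2k : (0:ℝ) < 2 ^ k := by positivity
    have e1 : ((2:ℝ) ^ (k+1)) = 2 ^ k * 2 := pow_succ 2 k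
    have hzd1 : (x + ((2 : ℝ) ^ k * 2)⁻¹ • h) + ((2 : ℝ) ^ k * 2)⁻¹ • h
        = x + ((2 : ℝ) ^ k)⁻¹ • h := by
      rw [add_assoc, ← add_smul]
      congr 2
      field_simp
      ring
    have hzd2 : (x + ((2 : ℝ) ^ k * 2)⁻¹ • h) - ((2 : ℝ) ^ k * 2)⁻¹ • h = x := by abel
    have hsec := hC (x + ((2 : ℝ) ^ k * 2)⁻¹ • h) (((2 : ℝ) ^ k * 2)⁻¹ • h)
    rw [hzd1, hzd2] at hsec
    have hsplit : a h k - a h (k+1)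
        = (2 : ℝ) ^ k • (F (x + ((2 : ℝ) ^ k)⁻¹ • h) + F x
            - 2 • F (x + ((2 : ℝ) ^ k * 2)⁻¹ • h)) := by
      simp only [ha, e1]
      module
    have hnd : ‖((2 : ℝ) ^ k * 2)⁻¹ • h‖ = ((2:ℝ) ^ k * 2)⁻¹ * ‖h‖ := by
      rw [norm_smul, Real.norm_eq_abs, abs_of_pos (by positivity)]
    have hsec' : ‖F (x + ((2 : ℝ) ^ k)⁻¹ • h) + F x - 2 • F (x + ((2 : ℝ) ^ k * 2)⁻¹ • h)‖
        ≤ C * ((((2:ℝ) ^ k * 2)⁻¹) ^ 2 * ‖h‖ ^ 2) := by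
      calc ‖F (x + ((2 : ℝ) ^ k)⁻¹ • h) + F x - 2 • F (x + ((2 : ℝ) ^ k * 2)⁻¹ • h)‖
          ≤ C * ‖((2 : ℝ) ^ k * 2)⁻¹ • h‖ ^ 2 := hsec
        _ = C * ((((2:ℝ) ^ k * 2)⁻¹) ^ 2 * ‖h‖ ^ 2) := by rw [hnd, mul_pow]
    rw [dist_eq_norm, hsplit, norm_smul, Real.norm_eq_abs, abs_of_pos h2k]
    calc (2:ℝ)^k * ‖F (x + ((2 : ℝ) ^ k)⁻¹ • h) + F x
            - 2 • F (x + ((2 : ℝ) ^ k * 2)⁻¹ • h)‖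
        ≤ (2:ℝ)^k * (C * ((((2:ℝ) ^ k * 2)⁻¹) ^ 2 * ‖h‖ ^ 2)) :=
          mul_le_mul_of_nonneg_left hsec' h2k.le
      _ = C * ‖h‖ ^ 2 / 4 * (1 / 2) ^ k := by
          have hp : ((1:ℝ) / 2) ^ k * 2 ^ k = 1 := by rw [← mul_pow]; norm_num
          field_simp
          linear_combination (-(C * ‖h‖ ^ 2 * 4)) * hp
  have hcauchy : ∀ h : X, CauchySeq (a h) := fun h =>
    cauchySeq_of_le_geometric (1/2) (C * ‖h‖ ^ 2 / 4) (by norm_num) (key h)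
  set D : X → Y := fun h => limUnder atTop (a h) with hD
  have htend : ∀ h : X, Tendsto (a h) atTop (nhds (D h)) := fun h =>
    (hcauchy h).tendsto_limUnder
  -- error bound
  have herr : ∀ h : X, ‖F (x + h) - F x - D h‖ ≤ C * ‖h‖ ^ 2 / 2 := by
    intro h
    have h1 := dist_le_of_le_geometric_of_tendsto₀ (1/2) (C * ‖h‖ ^ 2 / 4)
      (by norm_num) (key h) (htend h)
    have ha0 : a h 0 = F (x + h) - F x := by simp [ha]
    rw [ha0, dist_eq_norm] at h1
    calc ‖F (x + h) - F x - D h‖ ≤ C * ‖h‖ ^ 2 / 4 / (1 - 1/2) := h1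
      _ = C * ‖h‖ ^ 2 / 2 := by ring
  -- D is Lipschitz
  have hDlip : ∀ h h' : X, ‖D h - D h'‖ ≤ (L : ℝ) * ‖h - h'‖ := by
    intro h h'
    have ht : Tendsto (fun k => a h k - a h' k) atTop (nhds (D h - D h')) :=
      (htend h).sub (htend h')
    refine le_of_tendsto' ((continuous_norm.tendsto _).comp ht) (fun k => ?_)
    have h2k : (0:ℝ) < 2 ^ k := by positivity
    have hsplit : a h k - a h' k
        = (2:ℝ) ^ k • (F (x + ((2:ℝ) ^ k)⁻¹ • h) - F (x + ((2:ℝ) ^ k)⁻¹ • h')) := by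
      simp only [ha]; module
    have hdist : dist (x + ((2:ℝ) ^ k)⁻¹ • h) (x + ((2:ℝ) ^ k)⁻¹ • h')
        = ((2:ℝ) ^ k)⁻¹ * ‖h - h'‖ := by
      rw [dist_eq_norm]
      rw [show (x + ((2:ℝ) ^ k)⁻¹ • h) - (x + ((2:ℝ) ^ k)⁻¹ • h')
          = ((2:ℝ) ^ k)⁻¹ • (h - h') by module]
      rw [norm_smul, Real.norm_eq_abs, abs_of_pos (by positivity)]
    have hlip := hL.dist_le_mul (x + ((2:ℝ) ^ k)⁻¹ • h) (x + ((2:ℝ) ^ k)⁻¹ • h')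
    rw [hdist] at hlip
    rw [Function.comp_apply, hsplit, norm_smul, Real.norm_eq_abs, abs_of_pos h2k]
    rw [← dist_eq_norm]
    calc (2:ℝ) ^ k * dist (F (x + ((2:ℝ) ^ k)⁻¹ • h)) (F (x + ((2:ℝ) ^ k)⁻¹ • h'))
        ≤ (2:ℝ) ^ k * ((L : ℝ) * (((2:ℝ) ^ k)⁻¹ * ‖h - h'‖)) :=
          mul_le_mul_of_nonneg_left hlip h2k.le
      _ = (L : ℝ) * ‖h - h'‖ := by field_simp
  -- D is additive
  have hDadd : ∀ h₁ h₂ : X, D (h₁ + h₂) = D h₁ + D h₂ := by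
    intro h₁ h₂
    have ht : Tendsto (fun k => a (h₁ + h₂) k - a h₁ k - a h₂ k) atTop
        (nhds (D (h₁ + h₂) - D h₁ - D h₂)) := ((htend _).sub (htend _)).sub (htend _)
    have hb : ∀ k : ℕ, ‖a (h₁ + h₂) k - a h₁ k - a h₂ k‖
        ≤ (C * (‖h₁ + h₂‖ ^ 2 + ‖h₁ - h₂‖ ^ 2) / 4) * (1 / 2) ^ k := by
      intro k
      have h2k : (0:ℝ) < 2 ^ k := by positivity
      have q1 : (x + ((2:ℝ) ^ k * 2)⁻¹ • (h₁ + h₂)) + ((2:ℝ) ^ k * 2)⁻¹ • (h₁ + h₂)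
          = x + ((2:ℝ) ^ k)⁻¹ • (h₁ + h₂) := by
        match_scalars <;> field_simp <;> ring
      have q2 : (x + ((2:ℝ) ^ k * 2)⁻¹ • (h₁ + h₂)) - ((2:ℝ) ^ k * 2)⁻¹ • (h₁ + h₂) = x := by
        abel
      have q3 : (x + ((2:ℝ) ^ k * 2)⁻¹ • (h₁ + h₂)) + ((2:ℝ) ^ k * 2)⁻¹ • (h₁ - h₂)
          = x + ((2:ℝ) ^ k)⁻¹ • h₁ := by
        match_scalars <;> field_simp <;> ring
      have q4 : (x + ((2:ℝ) ^ k * 2)⁻¹ • (h₁ + h₂)) - ((2:ℝ) ^ k * 2)⁻¹ • (h₁ - h₂)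
          = x + ((2:ℝ) ^ k)⁻¹ • h₂ := by
        match_scalars <;> field_simp <;> ring
      have hs1 := hC (x + ((2:ℝ) ^ k * 2)⁻¹ • (h₁ + h₂)) (((2:ℝ) ^ k * 2)⁻¹ • (h₁ + h₂))
      rw [q1, q2] at hs1
      have hs2 := hC (x + ((2:ℝ) ^ k * 2)⁻¹ • (h₁ + h₂)) (((2:ℝ) ^ k * 2)⁻¹ • (h₁ - h₂))
      rw [q3, q4] at hs2
      have hn1 : ‖((2:ℝ) ^ k * 2)⁻¹ • (h₁ + h₂)‖ ^ 2
          = (((2:ℝ) ^ k * 2)⁻¹) ^ 2 * ‖h₁ + h₂‖ ^ 2 := by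
        rw [norm_smul, Real.norm_eq_abs, abs_of_pos (by positivity), mul_pow]
      have hn2 : ‖((2:ℝ) ^ k * 2)⁻¹ • (h₁ - h₂)‖ ^ 2
          = (((2:ℝ) ^ k * 2)⁻¹) ^ 2 * ‖h₁ - h₂‖ ^ 2 := by
        rw [norm_smul, Real.norm_eq_abs, abs_of_pos (by positivity), mul_pow]
      rw [hn1] at hs1
      rw [hn2] at hs2
      have hsplit : a (h₁ + h₂) k - a h₁ k - a h₂ k
          = (2:ℝ) ^ k • ((F (x + ((2:ℝ) ^ k)⁻¹ • (h₁ + h₂)) + F x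
                - 2 • F (x + ((2:ℝ) ^ k * 2)⁻¹ • (h₁ + h₂)))
              - (F (x + ((2:ℝ) ^ k)⁻¹ • h₁) + F (x + ((2:ℝ) ^ k)⁻¹ • h₂)
                - 2 • F (x + ((2:ℝ) ^ k * 2)⁻¹ • (h₁ + h₂)))) := by
        simp only [ha]; module
      rw [hsplit, norm_smul, Real.norm_eq_abs, abs_of_pos h2k]
      calc (2:ℝ) ^ k * ‖(F (x + ((2:ℝ) ^ k)⁻¹ • (h₁ + h₂)) + F x
                - 2 • F (x + ((2:ℝ) ^ k * 2)⁻¹ • (h₁ + h₂)))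
              - (F (x + ((2:ℝ) ^ k)⁻¹ • h₁) + F (x + ((2:ℝ) ^ k)⁻¹ • h₂)
                - 2 • F (x + ((2:ℝ) ^ k * 2)⁻¹ • (h₁ + h₂)))‖
          ≤ (2:ℝ) ^ k * (C * ((((2:ℝ) ^ k * 2)⁻¹) ^ 2 * ‖h₁ + h₂‖ ^ 2)
              + C * ((((2:ℝ) ^ k * 2)⁻¹) ^ 2 * ‖h₁ - h₂‖ ^ 2)) := by
            refine mul_le_mul_of_nonneg_left ((norm_sub_le _ _).trans (add_le_add hs1 hs2)) h2k.le
        _ = (C * (‖h₁ + h₂‖ ^ 2 + ‖h₁ - h₂‖ ^ 2) / 4) * (1 / 2) ^ k := by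
            have hp : ((1:ℝ) / 2) ^ k * 2 ^ k = 1 := by rw [← mul_pow]; norm_num
            field_simp
            linear_combination (-(C * ‖h₁ + h₂‖ ^ 2 * 4 + C * ‖h₁ - h₂‖ ^ 2 * 4)) * hp
    have h0 : Tendsto (fun k => a (h₁ + h₂) k - a h₁ k - a h₂ k) atTop (nhds 0) := by
      refine squeeze_zero_norm hb ?_
      have := tendsto_pow_atTop_nhds_zero_of_lt_one (by norm_num : (0:ℝ) ≤ 1/2) (by norm_num)
      simpa using this.const_mul (C * (‖h₁ + h₂‖ ^ 2 + ‖h₁ - h₂‖ ^ 2) / 4)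
    have heq := tendsto_nhds_unique ht h0
    have : D (h₁ + h₂) - D h₁ - D h₂ = 0 := heq
    have := sub_eq_zero.mp this
    linear_combination (norm := abel) this
  -- D is continuous, hence linear
  have hDcont : Continuous D := by
    refine (LipschitzWith.of_dist_le_mul (K := L) (fun h h' => ?_)).continuous
    rw [dist_eq_norm, dist_eq_norm]
    exact hDlip h h'
  set φ : X →L[ℝ] Y := AddMonoidHom.toRealLinearMap (AddMonoidHom.mk' D hDadd) hDcont with hφ
  have hφapp : ∀ h, φ h = D h := fun h => rfl
  refine ⟨φ, ?_⟩
  rw [hasFDerivAt_iff_isLittleO_nhds_zero]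
  rw [Asymptotics.isLittleO_iff]
  intro ε hε
  have hδ : (0:ℝ) < ε / (|C| / 2 + 1) := by positivity
  filter_upwards [Metric.ball_mem_nhds (0 : X) hδ] with h hh
  rw [mem_ball_zero_iff] at hh
  rw [hφapp]
  have h1 := herr h
  have h2 : ‖h‖ ≥ 0 := norm_nonneg h
  have h3 : C ≤ |C| := le_abs_self C
  have h4 : (0:ℝ) ≤ |C| := abs_nonneg C
  have h5 : (|C| / 2 + 1) * ‖h‖ < ε := by
    rw [← lt_div_iff₀' (by positivity)]
    exact hh
  have h6 : ((|C| / 2 + 1) * ‖h‖) * ‖h‖ ≤ ε * ‖h‖ := mul_le_mul_of_nonneg_right h5.le h2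
  calc ‖F (x + h) - F x - D h‖ ≤ C * ‖h‖ ^ 2 / 2 := h1
    _ = (C / 2) * (‖h‖ * ‖h‖) := by ring
    _ ≤ (|C| / 2 + 1) * (‖h‖ * ‖h‖) := by
        exact mul_le_mul_of_nonneg_right (by linarith) (mul_nonneg h2 h2)
    _ = ((|C| / 2 + 1) * ‖h‖) * ‖h‖ := by ring
    _ ≤ ε * ‖h‖ := h6

end SecDiff

section AuxMeasure

variable {n m : ℕ}

lemma volB_pos (n : ℕ) : 0 < volume (closedBall (0 : E n) 1) :=
  lt_of_lt_of_le (measure_ball_pos volume 0 one_pos) (measure_mono ball_subset_closedBall)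

lemma volB_ne_top (n : ℕ) : volume (closedBall (0 : E n) 1) ≠ ⊤ :=
  measure_closedBall_lt_top.ne

instance uniformBall_isProbability (n : ℕ) : IsProbabilityMeasure (uniformBall n) := by
  constructor
  rw [uniformBall, Measure.smul_apply, Measure.restrict_apply MeasurableSet.univ,
    Set.univ_inter, smul_eq_mul, ENNReal.inv_mul_cancel (volB_pos n).ne' (volB_ne_top n)]

lemma integrable_uniformBall {g : E n → E m} (hg : Continuous g) :
    Integrable g (uniformBall n) := by
  rw [uniformBall]
  refine Integrable.smul_measure ?_ (ENNReal.inv_ne_top.mpr (volB_pos n).ne')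
  exact (hg.continuousOn).integrableOn_compact (isCompact_closedBall _ _)

lemma ae_uniformBall (n : ℕ) : ∀ᵐ u ∂(uniformBall n), u ∈ closedBall (0 : E n) 1 := by
  rw [uniformBall]
  exact Measure.ae_smul_measure (ae_restrict_mem measurableSet_closedBall) _

lemma integral_ball_translate (Ψ : E n → E m) (a : E n) :
    ∫ u in closedBall (0 : E n) 1, Ψ (a + u) = ∫ v in closedBall a 1, Ψ v := by
  rw [← integral_indicator measurableSet_closedBall,
    ← integral_indicator measurableSet_closedBall,
    ← integral_add_left_eq_self (fun v => (closedBall a 1).indicator Ψ v) a]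
  congr 1
  ext u
  have hmem : a + u ∈ closedBall a 1 ↔ u ∈ closedBall (0 : E n) 1 := by
    simp [mem_closedBall, dist_eq_norm]
  by_cases hu : u ∈ closedBall (0 : E n) 1
  · rw [Set.indicator_of_mem (hmem.mpr hu), Set.indicator_of_mem hu]
  · rw [Set.indicator_of_notMem (fun hc => hu (hmem.mp hc)),
      Set.indicator_of_notMem hu]

lemma pow_one_add_sub_le (n : ℕ) {t : ℝ} (h0 : 0 ≤ t) (h1 : t ≤ 1) :
    (1 + t) ^ n - (1 - t) ^ n ≤ (n : ℝ) * 2 ^ n * t := by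
  induction n with
  | zero => simp
  | succ k ih =>
    have hb1 : (1 - t) ^ k ≤ 1 := pow_le_one₀ (by linarith) (by linarith)
    have hb0 : (0:ℝ) ≤ (1 - t) ^ k := pow_nonneg (by linarith) k
    have hm : (1 - t) ^ k ≤ (1 + t) ^ k := pow_le_pow_left₀ (by linarith) (by linarith) k
    have h2k : (0:ℝ) < 2 ^ k := by positivity
    have e1 : (1 + t) ^ (k+1) = (1 + t) * (1 + t) ^ k := by ring
    have e2 : (1 - t) ^ (k+1) = (1 - t) * (1 - t) ^ k := by ring
    have e3 : ((k:ℝ) + 1) * 2 ^ (k+1) * t = 2 * ((k:ℝ) * 2 ^ k * t) + 2 ^ (k+1) * t := by ring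
    push_cast
    rw [e1, e2, e3]
    have key : (1 + t) * (1 + t) ^ k - (1 - t) * (1 - t) ^ k
        = (1 + t) * ((1 + t) ^ k - (1 - t) ^ k) + 2 * t * (1 - t) ^ k := by ring
    rw [key]
    have hA : (1 + t) * ((1 + t) ^ k - (1 - t) ^ k) ≤ 2 * ((k:ℝ) * 2 ^ k * t) := by
      calc (1 + t) * ((1 + t) ^ k - (1 - t) ^ k) ≤ 2 * ((1 + t) ^ k - (1 - t) ^ k) := by
            apply mul_le_mul_of_nonneg_right (by linarith) (by linarith)
        _ ≤ 2 * ((k:ℝ) * 2 ^ k * t) := by linarith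
    have hB : 2 * t * (1 - t) ^ k ≤ 2 ^ (k+1) * t := by
      have : 2 * t * (1 - t) ^ k ≤ 2 * t * 1 := by
        apply mul_le_mul_of_nonneg_left hb1 (by linarith)
      have h2 : (2:ℝ) ≤ 2 ^ (k+1) := by
        calc (2:ℝ) = 2 ^ 1 := by norm_num
          _ ≤ 2 ^ (k+1) := by
            apply pow_le_pow_right₀ (by norm_num) (by omega)
      nlinarith
    linarith

lemma shell_vol_le (n : ℕ) {t : ℝ} (h0 : 0 ≤ t) (h1 : t ≤ 1) :
    (volume (closedBall (0:E n) (1+t) \ closedBall 0 (1-t))).toReal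
      ≤ ((n : ℝ) * 2 ^ n * t) * (volume (closedBall (0:E n) 1)).toReal := by
  have hsub : closedBall (0:E n) (1-t) ⊆ closedBall 0 (1+t) :=
    closedBall_subset_closedBall (by linarith)
  rw [measure_diff hsub measurableSet_closedBall.nullMeasurableSet
    measure_closedBall_lt_top.ne]
  rw [Measure.addHaar_closedBall' _ _ (by linarith : (0:ℝ) ≤ 1+t),
    Measure.addHaar_closedBall' _ _ (by linarith : (0:ℝ) ≤ 1-t)]
  rw [← ENNReal.sub_mul (fun _ _ => volB_ne_top n)]
  rw [ENNReal.toReal_mul]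
  rw [← ENNReal.ofReal_sub _ (pow_nonneg (by linarith) _)]
  rw [ENNReal.toReal_ofReal (by nlinarith [pow_le_pow_left₀ (by linarith : (0:ℝ) ≤ 1-t) (by linarith : (1:ℝ)-t ≤ 1+t) (Module.finrank ℝ (E n))])]
  have hfr : Module.finrank ℝ (E n) = n := finrank_euclideanSpace_fin
  rw [hfr]
  exact mul_le_mul_of_nonneg_right (pow_one_add_sub_le n h0 h1) ENNReal.toReal_nonneg

lemma secdiff_integral_bound (Ψ : E n → E m) (hΨc : Continuous Ψ)
    (K : ℝ) (hK : 0 ≤ K) (hΨ : ∀ v w : E n, ‖Ψ v - Ψ w‖ ≤ K * ‖v - w‖)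
    {a : E n} (ht : ‖a‖ ≤ 1) :
    ‖(∫ v in closedBall a 1, Ψ v) + (∫ v in closedBall (-a) 1, Ψ v)
        - 2 • ∫ v in closedBall (0:E n) 1, Ψ v‖
      ≤ (K * ‖a‖) *
        (volume (closedBall (0:E n) (1+‖a‖) \ closedBall 0 (1-‖a‖))).toReal := by
  have hΨ'c : Continuous (fun v : E n => Ψ (v - a)) :=
    hΨc.comp (continuous_id.sub continuous_const)
  have i1 : IntegrableOn Ψ (closedBall a 1) volume :=
    hΨc.continuousOn.integrableOn_compact (isCompact_closedBall _ _)
  have i2 : IntegrableOn Ψ (closedBall (0:E n) 1) volume :=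
    hΨc.continuousOn.integrableOn_compact (isCompact_closedBall _ _)
  have i3 : IntegrableOn (fun v : E n => Ψ (v - a)) (closedBall a 1) volume :=
    hΨ'c.continuousOn.integrableOn_compact (isCompact_closedBall _ _)
  have i4 : IntegrableOn (fun v : E n => Ψ (v - a)) (closedBall (0:E n) 1) volume :=
    hΨ'c.continuousOn.integrableOn_compact (isCompact_closedBall _ _)
  have e0 : ∫ v in closedBall a 1, Ψ (v - a) = ∫ u in closedBall (0:E n) 1, Ψ u := by
    rw [← integral_ball_translate (fun v => Ψ (v - a)) a]
    simp only [add_sub_cancel_left]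
  have e1 : ∫ v in closedBall (-a) 1, Ψ v = ∫ u in closedBall (0:E n) 1, Ψ (u - a) := by
    rw [← integral_ball_translate Ψ (-a)]
    simp only [neg_add_eq_sub]
  set g : E n → E m := fun v => Ψ v - Ψ (v - a) with hg
  have hgint1 : IntegrableOn g (closedBall a 1) volume := i1.sub i3
  have hgint2 : IntegrableOn g (closedBall (0:E n) 1) volume := i2.sub i4
  have hident : (∫ v in closedBall a 1, Ψ v) + (∫ v in closedBall (-a) 1, Ψ v)
        - 2 • ∫ v in closedBall (0:E n) 1, Ψ v
      = ∫ v, ((closedBall a 1).indicator g v - (closedBall (0:E n) 1).indicator g v) := by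
    rw [integral_sub ((integrable_indicator_iff measurableSet_closedBall).2 hgint1)
      ((integrable_indicator_iff measurableSet_closedBall).2 hgint2)]
    rw [integral_indicator measurableSet_closedBall, integral_indicator measurableSet_closedBall]
    rw [hg]
    rw [integral_sub i1 i3, integral_sub i2 i4]
    rw [e0, e1]
    abel
  rw [hident]
  set S : Set (E n) := closedBall (0:E n) (1+‖a‖) \ closedBall 0 (1-‖a‖) with hS
  have hSmeas : MeasurableSet S := measurableSet_closedBall.diff measurableSet_closedBall
  have hSfin : volume S < ⊤ :=
    lt_of_le_of_lt (measure_mono Set.diff_subset) measure_closedBall_lt_top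
  have hgnorm : ∀ v : E n, ‖g v‖ ≤ K * ‖a‖ := by
    intro v
    have := hΨ v (v - a)
    rwa [sub_sub_cancel] at this
  have hptwise : ∀ v : E n, ‖(closedBall a 1).indicator g v
      - (closedBall (0:E n) 1).indicator g v‖ ≤ S.indicator (fun _ => K * ‖a‖) v := by
    intro v
    have hind_nonneg : 0 ≤ S.indicator (fun _ => K * ‖a‖) v :=
      Set.indicator_nonneg (fun _ _ => by positivity) v
    by_cases h1 : v ∈ closedBall a 1 <;> by_cases h2 : v ∈ closedBall (0:E n) 1
    · rw [Set.indicator_of_mem h1, Set.indicator_of_mem h2, sub_self, norm_zero]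
      exact hind_nonneg
    · rw [Set.indicator_of_mem h1, Set.indicator_of_notMem h2, sub_zero]
      have hv1 : ‖v - a‖ ≤ 1 := mem_closedBall_iff_norm.mp h1
      have hv2 : 1 < ‖v‖ := by
        rw [mem_closedBall_zero_iff] at h2
        linarith [not_le.mp h2]
      have hvS : v ∈ S := by
        constructor
        · rw [mem_closedBall_zero_iff]
          calc ‖v‖ = ‖(v - a) + a‖ := by rw [sub_add_cancel]
            _ ≤ ‖v - a‖ + ‖a‖ := norm_add_le _ _
            _ ≤ 1 + ‖a‖ := by linarith
        · intro hmem
          rw [mem_closedBall_zero_iff] at hmem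
          linarith [norm_nonneg a]
      rw [Set.indicator_of_mem hvS]
      exact hgnorm v
    · rw [Set.indicator_of_notMem h1, Set.indicator_of_mem h2, zero_sub, norm_neg]
      have hv1 : 1 < ‖v - a‖ := by
        rw [mem_closedBall_iff_norm] at h1
        linarith [not_le.mp h1]
      have hv2 : ‖v‖ ≤ 1 := mem_closedBall_zero_iff.mp h2
      have hvS : v ∈ S := by
        constructor
        · rw [mem_closedBall_zero_iff]
          linarith [norm_nonneg a]
        · intro hmem
          rw [mem_closedBall_zero_iff] at hmem
          have : ‖v - a‖ ≤ ‖v‖ + ‖a‖ := norm_sub_le _ _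
          linarith
      rw [Set.indicator_of_mem hvS]
      exact hgnorm v
    · rw [Set.indicator_of_notMem h1, Set.indicator_of_notMem h2, sub_self, norm_zero]
      exact hind_nonneg
  have hbint : Integrable (S.indicator fun _ => K * ‖a‖) volume :=
    (integrable_indicator_iff hSmeas).2 (integrableOn_const hSfin.ne)
  calc ‖∫ v, ((closedBall a 1).indicator g v - (closedBall (0:E n) 1).indicator g v)‖
      ≤ ∫ v, S.indicator (fun _ => K * ‖a‖) v :=
        norm_integral_le_of_norm_le hbint (Filter.Eventually.of_forall hptwise)
    _ = (K * ‖a‖) * (volume S).toReal := by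
        rw [integral_indicator_const _ hSmeas, smul_eq_mul, mul_comm, measureReal_def]

end AuxMeasure

section YmuFacts

variable {dx dy : ℕ}

lemma ymu_shift (y : E dx → E dy) (μ : ℝ) (z : E dx) :
    ymu y μ z = ((volume (closedBall (0:E dx) 1))⁻¹).toReal
      • ∫ u in closedBall (0:E dx) 1, y (z + μ • u) := by
  rw [ymu, uniformBall, integral_smul_measure]

lemma integrable_shift (y : E dx → E dy) {Ly : ℝ≥0} (hLip : LipschitzWith Ly y)
    (μ : ℝ) (z : E dx) : Integrable (fun u => y (z + μ • u)) (uniformBall dx) :=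
  integrable_uniformBall (hLip.continuous.comp
    (continuous_const.add (continuous_id.const_smul μ)))

lemma ymu_lipschitz (y : E dx → E dy) {Ly : ℝ≥0} (hLip : LipschitzWith Ly y) (μ : ℝ) :
    LipschitzWith Ly (ymu y μ) := by
  refine LipschitzWith.of_dist_le_mul (fun x1 x2 => ?_)
  rw [dist_eq_norm, ymu, ymu,
    ← integral_sub (integrable_shift y hLip μ x1) (integrable_shift y hLip μ x2)]
  have hb : ∀ u : E dx, ‖y (x1 + μ • u) - y (x2 + μ • u)‖ ≤ (Ly : ℝ) * ‖x1 - x2‖ := by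
    intro u
    have := hLip.dist_le_mul (x1 + μ • u) (x2 + μ • u)
    rw [dist_eq_norm, dist_eq_norm, add_sub_add_comm, sub_self, add_zero] at this
    exact this
  calc ‖∫ u, (y (x1 + μ • u) - y (x2 + μ • u)) ∂(uniformBall dx)‖
      ≤ ((Ly : ℝ) * ‖x1 - x2‖) * ((uniformBall dx) Set.univ).toReal :=
        norm_integral_le_of_norm_le_const (Filter.Eventually.of_forall hb)
    _ = (Ly : ℝ) * dist x1 x2 := by
        rw [measure_univ, ENNReal.toReal_one, mul_one, dist_eq_norm]

lemma ymu_sub_bound (y : E dx → E dy) {Ly : ℝ≥0} (hLip : LipschitzWith Ly y)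
    {μ : ℝ} (hμ : 0 ≤ μ) (x : E dx) : ‖ymu y μ x - y x‖ ≤ (Ly : ℝ) * μ := by
  have hrw : ymu y μ x - y x = ∫ u, (y (x + μ • u) - y x) ∂(uniformBall dx) := by
    rw [integral_sub (integrable_shift y hLip μ x) (integrable_const _), integral_const,
      probReal_univ, one_smul, ymu]
  rw [hrw]
  have hb : ∀ᵐ u ∂(uniformBall dx), ‖y (x + μ • u) - y x‖ ≤ (Ly : ℝ) * μ := by
    filter_upwards [ae_uniformBall dx] with u hu
    have h1 := hLip.dist_le_mul (x + μ • u) x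
    rw [dist_eq_norm, dist_eq_norm, add_sub_cancel_left] at h1
    have h2 : ‖μ • u‖ ≤ μ := by
      rw [norm_smul, Real.norm_eq_abs, abs_of_nonneg hμ]
      calc μ * ‖u‖ ≤ μ * 1 :=
          mul_le_mul_of_nonneg_left (mem_closedBall_zero_iff.mp hu) hμ
        _ = μ := mul_one μ
    calc ‖y (x + μ • u) - y x‖ ≤ (Ly : ℝ) * ‖μ • u‖ := h1
      _ ≤ (Ly : ℝ) * μ := mul_le_mul_of_nonneg_left h2 Ly.coe_nonneg
  calc ‖∫ u, (y (x + μ • u) - y x) ∂(uniformBall dx)‖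
      ≤ ((Ly : ℝ) * μ) * ((uniformBall dx) Set.univ).toReal :=
        norm_integral_le_of_norm_le_const hb
    _ = (Ly : ℝ) * μ := by rw [measure_univ, ENNReal.toReal_one, mul_one]

lemma ymu_differentiable (y : E dx → E dy) {Ly : ℝ≥0} (hLip : LipschitzWith Ly y)
    {μ : ℝ} (hμ : 0 < μ) : Differentiable ℝ (ymu y μ) := by
  set c : ℝ := ((volume (closedBall (0:E dx) 1))⁻¹).toReal with hc
  have hc0 : 0 ≤ c := ENNReal.toReal_nonneg
  have hcV : c * (volume (closedBall (0:E dx) 1)).toReal = 1 := by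
    rw [hc, ENNReal.toReal_inv]
    exact inv_mul_cancel₀
      (ENNReal.toReal_pos (volB_pos dx).ne' (volB_ne_top dx)).ne'
  refine differentiable_of_secdiff_bound _ Ly (ymu_lipschitz y hLip μ)
    (((Ly : ℝ) * ((dx : ℝ) * 2 ^ dx) + 2 * (Ly : ℝ)) / μ) (fun x h => ?_)
  have hCsplit : (((Ly : ℝ) * ((dx : ℝ) * 2 ^ dx) + 2 * (Ly : ℝ)) / μ) * ‖h‖ ^ 2
      = ((Ly : ℝ) * ((dx : ℝ) * 2 ^ dx) / μ) * ‖h‖ ^ 2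
        + (2 * (Ly : ℝ) / μ) * ‖h‖ ^ 2 := by ring
  by_cases hcase : ‖h‖ ≤ μ
  · -- small step: use the geometric cancellation
    set a : E dx := μ⁻¹ • h with ha
    have hna : ‖a‖ = ‖h‖ / μ := by
      rw [ha, norm_smul, Real.norm_eq_abs, abs_of_pos (inv_pos.2 hμ), inv_mul_eq_div]
    have hta : ‖a‖ ≤ 1 := by
      rw [hna]
      exact div_le_one_of_le₀ hcase hμ.le
    set Ψ : E dx → E dy := fun v => y (x + μ • v) with hΨ
    have hΨc : Continuous Ψ :=
      hLip.continuous.comp (continuous_const.add (continuous_id.const_smul μ))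
    have hΨlip : ∀ v w : E dx, ‖Ψ v - Ψ w‖ ≤ ((Ly : ℝ) * μ) * ‖v - w‖ := by
      intro v w
      have h1 := hLip.dist_le_mul (x + μ • v) (x + μ • w)
      rw [dist_eq_norm, dist_eq_norm, add_sub_add_left_eq_sub, ← smul_sub, norm_smul,
        Real.norm_eq_abs, abs_of_pos hμ] at h1
      calc ‖Ψ v - Ψ w‖ ≤ (Ly : ℝ) * (μ * ‖v - w‖) := h1
        _ = ((Ly : ℝ) * μ) * ‖v - w‖ := by ring
    have key : ∀ z : E dx, ymu y μ (x + z) = c • ∫ v in closedBall (μ⁻¹ • z) 1, Ψ v := by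
      intro z
      rw [ymu_shift]
      congr 1
      have hfun : (fun u : E dx => y (x + z + μ • u)) = fun u => Ψ (μ⁻¹ • z + u) := by
        funext u
        rw [hΨ]
        simp only
        congr 1
        rw [smul_add, smul_smul, mul_inv_cancel₀ hμ.ne', one_smul]
        abel
      rw [hfun]
      exact integral_ball_translate Ψ (μ⁻¹ • z)
    have e1 : ymu y μ (x + h) = c • ∫ v in closedBall a 1, Ψ v := key h
    have e2 : ymu y μ (x - h) = c • ∫ v in closedBall (-a) 1, Ψ v := by
      have h2 := key (-h)
      rw [← sub_eq_add_neg, smul_neg, ← ha] at h2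
      exact h2
    have e3 : ymu y μ x = c • ∫ v in closedBall (0 : E dx) 1, Ψ v := by
      have h3 := key 0
      rw [add_zero, smul_zero] at h3
      exact h3
    rw [e1, e2, e3]
    have hcomb : (c • ∫ v in closedBall a 1, Ψ v) + (c • ∫ v in closedBall (-a) 1, Ψ v)
        - 2 • (c • ∫ v in closedBall (0 : E dx) 1, Ψ v)
        = c • ((∫ v in closedBall a 1, Ψ v) + (∫ v in closedBall (-a) 1, Ψ v)
            - 2 • ∫ v in closedBall (0 : E dx) 1, Ψ v) := by
      rw [two_smul, two_smul, ← smul_add, ← smul_add, ← smul_sub]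
    rw [hcomb, norm_smul, Real.norm_eq_abs, abs_of_nonneg hc0]
    have hbd := secdiff_integral_bound Ψ hΨc ((Ly : ℝ) * μ)
      (by positivity) hΨlip hta
    have hs := shell_vol_le dx (norm_nonneg a) hta
    have hchain : c * ‖(∫ v in closedBall a 1, Ψ v) + (∫ v in closedBall (-a) 1, Ψ v)
        - 2 • ∫ v in closedBall (0 : E dx) 1, Ψ v‖
        ≤ c * (((Ly : ℝ) * μ * ‖a‖) *
          (((dx : ℝ) * 2 ^ dx * ‖a‖) * (volume (closedBall (0:E dx) 1)).toReal)) := by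
      refine mul_le_mul_of_nonneg_left (hbd.trans ?_) hc0
      exact mul_le_mul_of_nonneg_left hs (by positivity)
    refine hchain.trans ?_
    rw [hCsplit]
    have hstep : c * (((Ly : ℝ) * μ * ‖a‖) *
          (((dx : ℝ) * 2 ^ dx * ‖a‖) * (volume (closedBall (0:E dx) 1)).toReal))
        = ((Ly : ℝ) * μ * ((dx : ℝ) * 2 ^ dx) * ‖a‖ ^ 2)
          * (c * (volume (closedBall (0:E dx) 1)).toReal) := by ring
    rw [hstep, hcV, mul_one, hna]
    have hend : (Ly : ℝ) * μ * ((dx : ℝ) * 2 ^ dx) * (‖h‖ / μ) ^ 2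
        = ((Ly : ℝ) * ((dx : ℝ) * 2 ^ dx) / μ) * ‖h‖ ^ 2 := by
      field_simp
    rw [hend]
    have : 0 ≤ (2 * (Ly : ℝ) / μ) * ‖h‖ ^ 2 := by positivity
    linarith
  · -- large step: use Lipschitz continuity
    push_neg at hcase
    have hlip := ymu_lipschitz y hLip μ
    have hb1 : ‖ymu y μ (x + h) - ymu y μ x‖ ≤ (Ly : ℝ) * ‖h‖ := by
      have := hlip.dist_le_mul (x + h) x
      rwa [dist_eq_norm, dist_eq_norm, add_sub_cancel_left] at this
    have hb2 : ‖ymu y μ (x - h) - ymu y μ x‖ ≤ (Ly : ℝ) * ‖h‖ := by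
      have := hlip.dist_le_mul (x - h) x
      rwa [dist_eq_norm, dist_eq_norm, sub_sub_cancel_left, norm_neg] at this
    have hsplit : ymu y μ (x + h) + ymu y μ (x - h) - 2 • ymu y μ x
        = (ymu y μ (x + h) - ymu y μ x) + (ymu y μ (x - h) - ymu y μ x) := by
      rw [two_smul]
      abel
    rw [hsplit]
    have h1 : ‖(ymu y μ (x + h) - ymu y μ x) + (ymu y μ (x - h) - ymu y μ x)‖
        ≤ 2 * (Ly : ℝ) * ‖h‖ := by
      calc ‖(ymu y μ (x + h) - ymu y μ x) + (ymu y μ (x - h) - ymu y μ x)‖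
          ≤ ‖ymu y μ (x + h) - ymu y μ x‖ + ‖ymu y μ (x - h) - ymu y μ x‖ :=
            norm_add_le _ _
        _ ≤ 2 * (Ly : ℝ) * ‖h‖ := by linarith
    refine h1.trans ?_
    rw [hCsplit]
    have h2 : 2 * (Ly : ℝ) * ‖h‖ ≤ (2 * (Ly : ℝ) / μ) * ‖h‖ ^ 2 := by
      rw [div_mul_eq_mul_div, le_div_iff₀ hμ]
      have hnn : (0 : ℝ) ≤ 2 * (Ly : ℝ) * ‖h‖ := by positivity
      calc 2 * (Ly : ℝ) * ‖h‖ * μ ≤ 2 * (Ly : ℝ) * ‖h‖ * ‖h‖ :=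
          mul_le_mul_of_nonneg_left hcase.le hnn
        _ = 2 * (Ly : ℝ) * ‖h‖ ^ 2 := by ring
    have h3 : 0 ≤ ((Ly : ℝ) * ((dx : ℝ) * 2 ^ dx) / μ) * ‖h‖ ^ 2 := by positivity
    linarith

end YmuFacts

set_option maxHeartbeats 1000000 in
/-- the bias of `ḡ(x) = ∇_x f(x, y*(x)) + Jac y_μ(x)ᵀ ∇_y f(x, y*(x))`
relative to `∇F_μ(x)` is at most `L_g (1 + L_y) L_y μ`. -/
theorem stmt9 (dx dy : ℕ) (f : E dx × E dy → ℝ) (Lg : ℝ≥0)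
    (hfdiff : Differentiable ℝ f)
    (hgradLip : ∀ p q : E dx × E dy, ‖fderiv ℝ f p - fderiv ℝ f q‖ ≤ (Lg : ℝ) * ‖p - q‖)
    (ystar : E dx → E dy) (Ly : ℝ≥0) (hLip : LipschitzWith Ly ystar)
    (μ : ℝ) (hμ : 0 < μ) (x : E dx) :
    ‖(gradx f x (ystar x)
        + (ContinuousLinearMap.adjoint (fderiv ℝ (ymu ystar μ) x)) (grady f x (ystar x)))
      - gradient (Fmu f ystar μ) x‖
      ≤ (Lg : ℝ) * (1 + (Ly : ℝ)) * (Ly : ℝ) * μ := by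
  have hJdiff : DifferentiableAt ℝ (ymu ystar μ) x := (ymu_differentiable ystar hLip hμ) x
  set J : E dx →L[ℝ] E dy := fderiv ℝ (ymu ystar μ) x with hJ
  have hJder : HasFDerivAt (ymu ystar μ) J x := hJdiff.hasFDerivAt
  have hJnorm : ‖J‖ ≤ (Ly : ℝ) := norm_fderiv_le_of_lipschitz ℝ (ymu_lipschitz ystar hLip μ)
  set Dμ : (E dx × E dy) →L[ℝ] ℝ := fderiv ℝ f (x, ymu ystar μ x) with hDμ
  set Ds : (E dx × E dy) →L[ℝ] ℝ := fderiv ℝ f (x, ystar x) with hDs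
  -- chain rule for Fmu
  have hprod : HasFDerivAt (fun x' : E dx => (x', ymu ystar μ x'))
      ((ContinuousLinearMap.id ℝ (E dx)).prod J) x := (hasFDerivAt_id x).prodMk hJder
  have hcomp : HasFDerivAt (Fmu f ystar μ)
      (Dμ.comp ((ContinuousLinearMap.id ℝ (E dx)).prod J)) x :=
    (hfdiff (x, ymu ystar μ x)).hasFDerivAt.comp x hprod
  have hgradF : ∀ v : E dx, ⟪gradient (Fmu f ystar μ) x, v⟫_ℝ = Dμ (v, J v) := by
    intro v
    rw [gradient, hcomp.fderiv, InnerProductSpace.toDual_symm_apply]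
    rfl
  have hgx : ∀ (yy : E dy) (v : E dx),
      ⟪gradx f x yy, v⟫_ℝ = (fderiv ℝ f (x, yy)) (v, 0) := by
    intro yy v
    have h1 : HasFDerivAt (fun x' : E dx => f (x', yy))
        ((fderiv ℝ f (x, yy)).comp (ContinuousLinearMap.inl ℝ (E dx) (E dy))) x :=
      (hfdiff (x, yy)).hasFDerivAt.comp x (hasFDerivAt_prodMk_left x yy)
    rw [gradx, gradient, h1.fderiv, InnerProductSpace.toDual_symm_apply]
    rfl
  have hgy : ∀ (yy : E dy) (w : E dy),
      ⟪grady f x yy, w⟫_ℝ = (fderiv ℝ f (x, yy)) (0, w) := by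
    intro yy w
    have h1 : HasFDerivAt (fun y' : E dy => f (x, y'))
        ((fderiv ℝ f (x, yy)).comp (ContinuousLinearMap.inr ℝ (E dx) (E dy))) yy :=
      (hfdiff (x, yy)).hasFDerivAt.comp yy (hasFDerivAt_prodMk_right x yy)
    rw [grady, gradient, h1.fderiv, InnerProductSpace.toDual_symm_apply]
    rfl
  set W : E dx := (gradx f x (ystar x)
      + (ContinuousLinearMap.adjoint J) (grady f x (ystar x)))
      - gradient (Fmu f ystar μ) x with hW
  have keyW : ∀ v : E dx, ⟪W, v⟫_ℝ = (Ds - Dμ) (v, J v) := by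
    intro v
    rw [hW, inner_sub_left, inner_add_left, hgx, hgradF,
      ContinuousLinearMap.adjoint_inner_left, hgy]
    rw [ContinuousLinearMap.sub_apply]
    have : ((v, (0 : E dy)) : E dx × E dy) + (0, J v) = (v, J v) := by
      rw [Prod.mk_add_mk, add_zero, zero_add]
    rw [← this, map_add, map_add]
  -- norm bounds
  have hΔ : ‖Ds - Dμ‖ ≤ (Lg : ℝ) * ((Ly : ℝ) * μ) := by
    have h1 := hgradLip (x, ystar x) (x, ymu ystar μ x)
    have h2 : ((x, ystar x) : E dx × E dy) - (x, ymu ystar μ x)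
        = (0, ystar x - ymu ystar μ x) := by
      rw [Prod.mk_sub_mk, sub_self]
    rw [h2] at h1
    have h3 : ‖((0 : E dx), ystar x - ymu ystar μ x)‖ = ‖ystar x - ymu ystar μ x‖ := by
      rw [Prod.norm_def, norm_zero]
      exact max_eq_right (norm_nonneg _)
    rw [h3] at h1
    have h4 : ‖ystar x - ymu ystar μ x‖ ≤ (Ly : ℝ) * μ := by
      rw [norm_sub_rev]
      exact ymu_sub_bound ystar hLip hμ.le x
    calc ‖Ds - Dμ‖ ≤ (Lg : ℝ) * ‖ystar x - ymu ystar μ x‖ := h1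
      _ ≤ (Lg : ℝ) * ((Ly : ℝ) * μ) := mul_le_mul_of_nonneg_left h4 Lg.coe_nonneg
  have hpair : ‖((W, J W) : E dx × E dy)‖ ≤ (1 + (Ly : ℝ)) * ‖W‖ := by
    rw [Prod.norm_def]
    apply max_le
    · nlinarith [norm_nonneg W, Ly.coe_nonneg]
    · calc ‖J W‖ ≤ ‖J‖ * ‖W‖ := J.le_opNorm W
        _ ≤ (Ly : ℝ) * ‖W‖ := mul_le_mul_of_nonneg_right hJnorm (norm_nonneg W)
        _ ≤ (1 + (Ly : ℝ)) * ‖W‖ := by nlinarith [norm_nonneg W]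
  have hWsq : ‖W‖ * ‖W‖ ≤ ((Lg : ℝ) * ((Ly : ℝ) * μ) * (1 + (Ly : ℝ))) * ‖W‖ := by
    have h0 : ‖W‖ * ‖W‖ = ⟪W, W⟫_ℝ := (real_inner_self_eq_norm_mul_norm W).symm
    rw [h0, keyW W]
    calc (Ds - Dμ) (W, J W) ≤ ‖(Ds - Dμ) (W, J W)‖ := le_abs_self _
      _ ≤ ‖Ds - Dμ‖ * ‖((W, J W) : E dx × E dy)‖ := (Ds - Dμ).le_opNorm _
      _ ≤ ((Lg : ℝ) * ((Ly : ℝ) * μ)) * ((1 + (Ly : ℝ)) * ‖W‖) := by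
          apply mul_le_mul hΔ hpair (norm_nonneg _) (by positivity)
      _ = ((Lg : ℝ) * ((Ly : ℝ) * μ) * (1 + (Ly : ℝ))) * ‖W‖ := by ring
  have hfin : ‖W‖ ≤ (Lg : ℝ) * ((Ly : ℝ) * μ) * (1 + (Ly : ℝ)) := by
    rcases eq_or_lt_of_le (norm_nonneg W) with h | h
    · rw [← h]
      positivity
    · exact le_of_mul_le_mul_right hWsq h
  calc ‖W‖ ≤ (Lg : ℝ) * ((Ly : ℝ) * μ) * (1 + (Ly : ℝ)) := hfin
    _ = (Lg : ℝ) * (1 + (Ly : ℝ)) * (Ly : ℝ) * μ := by ring
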